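/- arXiv:1808.07600 — 2 statements merged into one kernel-verified Lean document; each statement's English description precedes it below -/
import Mathlib

section
/- Let p be an integer-valued supermodular set-function on the subsets of a nonempty finite set S with p(∅) = 0, and assume Ḃ(p) is nonempty. Then min{ Σ_{s ∈ S} m(s)² : m ∈ Ḃ(p) } = max{ p̂_σ(π) − Σ_{s ∈ S} ⌊π(s)/2⌋·⌈π(s)/2⌉ }, where the maximum is taken over all π : S → ℤ and all bijections σ : {1, …, n} → S with π(σ(1)) ≥ ⋯ ≥ π(σ(n)); moreover, the maximum is attained by some π every component of which is an odd integer (together with any nonincreasing arrangement σ of that π). -/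
open Finset

variable {α : Type*}

/-- Integer-valued supermodular set-function. -/
def Supermodular [DecidableEq α] (p : Finset α → ℤ) : Prop :=
  ∀ X Y : Finset α, p X + p Y ≤ p (X ∩ Y) + p (X ∪ Y)

/-- The M-convex set `Ḃ(p)` of integral elements of the base-polyhedron `B'(p)`:
all `m : α → ℤ` with `m̃(X) ≥ p(X)` for every `X` and `m̃(S) = p(S)`. -/
def Bdot [Fintype α] (p : Finset α → ℤ) : Set (α → ℤ) :=
  {m | (∀ X : Finset α, p X ≤ ∑ s ∈ X, m s) ∧ (∑ s, m s) = p Finset.univ}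

/-- `x↓`: the values of `x` arranged in nonincreasing order. -/
def sortedDesc [Fintype α] (x : α → ℤ) : List ℤ :=
  ((Finset.univ.val.map x).sort (· ≤ ·)).reverse

/-- `x↑`: the values of `x` arranged in nondecreasing order. -/
def sortedAsc [Fintype α] (x : α → ℤ) : List ℤ :=
  (Finset.univ.val.map x).sort (· ≤ ·)

/-- `x ≤_dec y`: `x↓` is lexicographically less than or equal to `y↓`. -/
def DecLE [Fintype α] (x y : α → ℤ) : Prop :=
  sortedDesc x = sortedDesc y ∨ List.Lex (· < ·) (sortedDesc x) (sortedDesc y)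

/-- `x ≤_inc y`: `x↑` is lexicographically less than or equal to `y↑`. -/
def IncLE [Fintype α] (x y : α → ℤ) : Prop :=
  sortedAsc x = sortedAsc y ∨ List.Lex (· < ·) (sortedAsc x) (sortedAsc y)

/-- `m` is a decreasingly minimal element of `Bdot p`. -/
def DecMin [Fintype α] (p : Finset α → ℤ) (m : α → ℤ) : Prop :=
  m ∈ Bdot p ∧ ∀ y ∈ Bdot p, DecLE m y

/-- The linear-extension value `p̂_σ(π)` for a nonincreasing arrangement `σ` of `π`:
`p̂_σ(π) = p(S)·π(σ(n)) + Σ_{j=1}^{n−1} p(I_j)·(π(σ(j)) − π(σ(j+1)))`,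
where `I_j = {σ(1), …, σ(j)}`. -/
def phat [Fintype α] [DecidableEq α] (p : Finset α → ℤ) (π : α → ℤ)
    (σ : Fin (Fintype.card α) ≃ α) : ℤ :=
  ∑ j : Fin (Fintype.card α),
    p ((Finset.univ.filter (fun i => i ≤ j)).image σ) *
      (π (σ j) -
        if h : (j : ℕ) + 1 < Fintype.card α then π (σ ⟨(j : ℕ) + 1, h⟩) else 0)

section Helpers

/-- `X` is tight for `m`. -/
def Tight [DecidableEq α] (p : Finset α → ℤ) (m : α → ℤ) (X : Finset α) : Prop :=
  ∑ s ∈ X, m s = p X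

variable [Fintype α] [DecidableEq α] {p : Finset α → ℤ} {m : α → ℤ}

lemma tight_univ (hm : m ∈ Bdot p) : Tight p m univ := hm.2

lemma tight_union (hp : Supermodular p) (hm : m ∈ Bdot p)
    {X Y : Finset α} (hX : Tight p m X) (hY : Tight p m Y) : Tight p m (X ∪ Y) := by
  have h1 := hm.1 (X ∩ Y)
  have h2 := hp X Y
  have h3 := Finset.sum_union_inter (s₁ := X) (s₂ := Y) (f := m)
  have h4 := hm.1 (X ∪ Y)
  unfold Tight at *
  linarith

lemma tight_inter (hp : Supermodular p) (hm : m ∈ Bdot p)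
    {X Y : Finset α} (hX : Tight p m X) (hY : Tight p m Y) : Tight p m (X ∩ Y) := by
  have h1 := hm.1 (X ∪ Y)
  have h2 := hp X Y
  have h3 := Finset.sum_union_inter (s₁ := X) (s₂ := Y) (f := m)
  have h4 := hm.1 (X ∩ Y)
  unfold Tight at *
  linarith

lemma tight_biUnion (hp : Supermodular p) (hm : m ∈ Bdot p) (h0 : p ∅ = 0)
    (Y : α → Finset α) (F : Finset α) (hF : ∀ u ∈ F, Tight p m (Y u)) :
    Tight p m (F.biUnion Y) := by
  classical
  induction F using Finset.induction_on with
  | empty => simpa [Tight] using h0.symm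
  | insert _ _ hnotmem ih =>
    rw [Finset.biUnion_insert]
    exact tight_union hp hm (hF _ (mem_insert_self _ _))
      (ih fun u hu => hF u (mem_insert_of_mem hu))

lemma exists_min_tight (hp : Supermodular p) (hm : m ∈ Bdot p) (s : α) :
    ∃ Y, Tight p m Y ∧ s ∈ Y ∧ ∀ Z, Tight p m Z → s ∈ Z → Y ⊆ Z := by
  classical
  let F := (univ : Finset α).powerset.filter (fun Z => Tight p m Z ∧ s ∈ Z)
  have hne : F.Nonempty := ⟨univ, by simp [F, tight_univ hm]⟩
  obtain ⟨Y, hYF, hmin⟩ := F.exists_min_image Finset.card hne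
  simp only [F, mem_filter, mem_powerset] at hYF
  refine ⟨Y, hYF.2.1, hYF.2.2, ?_⟩
  intro Z hZ hsZ
  have hZY : Tight p m (Y ∩ Z) := tight_inter hp hm hYF.2.1 hZ
  have hmem : Y ∩ Z ∈ F := by
    simp only [F, mem_filter, mem_powerset]
    exact ⟨subset_univ _, hZY, mem_inter.mpr ⟨hYF.2.2, hsZ⟩⟩
  have hc := hmin _ hmem
  have heq : Y ∩ Z = Y := Finset.eq_of_subset_of_card_le inter_subset_left hc
  intro x hx
  rw [← heq] at hx
  exact (mem_inter.mp hx).2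

lemma exchange_mem (hm : m ∈ Bdot p) {s t : α} (hst : t ≠ s)
    (h : ∀ Z, Tight p m Z → s ∈ Z → t ∈ Z) :
    (fun u => m u + (if u = t then 1 else 0) - (if u = s then 1 else 0)) ∈ Bdot p := by
  have hsum : ∀ X : Finset α,
      ∑ u ∈ X, (m u + (if u = t then 1 else 0) - (if u = s then 1 else 0))
        = (∑ u ∈ X, m u) + (if t ∈ X then 1 else 0) - (if s ∈ X then 1 else 0) := by
    intro X
    rw [Finset.sum_sub_distrib, Finset.sum_add_distrib,
      Finset.sum_ite_eq' X t (fun _ => (1:ℤ)), Finset.sum_ite_eq' X s (fun _ => (1:ℤ))]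
  constructor
  · intro X
    rw [hsum X]
    by_cases hs : s ∈ X
    · by_cases ht : t ∈ X
      · simpa [hs, ht] using hm.1 X
      · have hnt : ¬ Tight p m X := fun hT => ht (h X hT hs)
        have h1 : p X ≤ ∑ u ∈ X, m u := hm.1 X
        have h2 : p X ≠ ∑ u ∈ X, m u := fun e => hnt e.symm
        simp only [hs, ht, if_true, if_false]
        omega
    · by_cases ht : t ∈ X <;> simp only [hs, ht, if_true, if_false] <;> linarith [hm.1 X]
  · rw [hsum univ]
    simp [hm.2]

lemma abel_nat (g h : ℕ → ℤ) (N : ℕ) :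
    ∑ k ∈ range N, g k * h k
      + ∑ k ∈ range N, (∑ j ∈ range (k+1), h j) * (g (k+1) - g k)
      = g N * ∑ j ∈ range N, h j := by
  induction N with
  | zero => simp
  | succ N ih =>
    rw [sum_range_succ (fun k => g k * h k),
      sum_range_succ (fun k => (∑ j ∈ range (k+1), h j) * (g (k+1) - g k)),
      sum_range_succ h]
    linear_combination ih

lemma inner_fin (n : ℕ) (f mm : Fin n → ℤ) :
    ∑ j, f j * mm j =
      ∑ j : Fin n, (∑ i ∈ univ.filter (fun i => i ≤ j), mm i) *
        (f j - if h : (j : ℕ) + 1 < n then f ⟨(j : ℕ) + 1, h⟩ else 0) := by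
  classical
  set g : ℕ → ℤ := fun k => if h : k < n then f ⟨k,h⟩ else 0 with hg
  set hh : ℕ → ℤ := fun k => if h : k < n then mm ⟨k,h⟩ else 0 with hhh
  have step1 : ∑ j, f j * mm j = ∑ k ∈ range n, g k * hh k := by
    rw [← Fin.sum_univ_eq_sum_range (fun k => g k * hh k) n]
    apply Finset.sum_congr rfl
    intro j _
    simp [hg, hhh, j.isLt]
  have habel := abel_nat g hh n
  have hgn : g n = 0 := by simp [hg]
  rw [hgn] at habel
  have step2 : ∑ k ∈ range n, g k * hh k
      = ∑ k ∈ range n, (∑ j ∈ range (k+1), hh j) * (g k - g (k+1)) := by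
    have hz : (∑ k ∈ range n, (∑ j ∈ range (k+1), hh j) * (g k - g (k+1)))
        + (∑ k ∈ range n, (∑ j ∈ range (k+1), hh j) * (g (k+1) - g k)) = 0 := by
      rw [← Finset.sum_add_distrib]
      apply Finset.sum_eq_zero
      intro k _; ring
    linarith
  rw [step1, step2,
    ← Fin.sum_univ_eq_sum_range (fun k => (∑ j ∈ range (k+1), hh j) * (g k - g (k+1))) n]
  apply Finset.sum_congr rfl
  intro j _
  have hIj : ∑ i ∈ univ.filter (fun i => i ≤ j), mm i = ∑ i ∈ range ((j:ℕ)+1), hh i := by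
    rw [Finset.sum_filter]
    have hcong : ∀ i : Fin n, (if i ≤ j then mm i else 0)
        = (fun k => if k ≤ (j:ℕ) then hh k else 0) (i : ℕ) := by
      intro i
      simp only [Fin.le_def, hhh, i.isLt, dif_pos, Fin.eta]
    rw [Finset.sum_congr rfl (fun i _ => hcong i),
      Fin.sum_univ_eq_sum_range (fun k => if k ≤ (j:ℕ) then hh k else 0) n,
      ← Finset.sum_filter]
    congr 1
    ext k
    simp only [mem_filter, mem_range]
    have := j.isLt
    omega
  rw [← hIj]
  congr 1
  have hgj : g (j:ℕ) = f j := by simp [hg, j.isLt]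
  have hgj1 : g ((j:ℕ)+1) = if h : (j : ℕ) + 1 < n then f ⟨(j : ℕ) + 1, h⟩ else 0 := by
    simp [hg]
  rw [hgj, hgj1]

lemma inner_sum_eq (π m : α → ℤ) (σ : Fin (Fintype.card α) ≃ α) :
    ∑ s, π s * m s =
      ∑ j : Fin (Fintype.card α),
        (∑ s ∈ (Finset.univ.filter (fun i => i ≤ j)).image σ, m s) *
          (π (σ j) - if h : (j : ℕ) + 1 < Fintype.card α then π (σ ⟨(j : ℕ) + 1, h⟩) else 0) := by
  rw [← Equiv.sum_comp σ (fun s => π s * m s),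
    inner_fin (Fintype.card α) (fun j => π (σ j)) (fun j => m (σ j))]
  apply Finset.sum_congr rfl
  intro j _
  congr 1
  rw [Finset.sum_image (fun a _ b _ hab => σ.injective hab)]

lemma prefix_univ (σ : Fin (Fintype.card α) ≃ α) (j : Fin (Fintype.card α))
    (h : ¬ ((j:ℕ) + 1 < Fintype.card α)) :
    (Finset.univ.filter (fun i => i ≤ j)).image σ = univ := by
  have hfil : (univ : Finset (Fin (Fintype.card α))).filter (fun i => i ≤ j) = univ := by
    ext i
    simp only [mem_filter, mem_univ, true_and, iff_true, Fin.le_def]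
    have h1 := i.isLt
    have h2 := j.isLt
    omega
  rw [hfil]
  ext x
  simp only [mem_image, mem_univ, iff_true, true_and]
  exact ⟨σ.symm x, σ.apply_symm_apply x⟩

lemma phat_le (hm : m ∈ Bdot p) (π : α → ℤ) (σ : Fin (Fintype.card α) ≃ α)
    (hmono : ∀ i j : Fin (Fintype.card α), i ≤ j → π (σ j) ≤ π (σ i)) :
    phat p π σ ≤ ∑ s, π s * m s := by
  rw [inner_sum_eq π m σ]
  unfold phat
  apply Finset.sum_le_sum
  intro j _
  by_cases hj : (j:ℕ) + 1 < Fintype.card α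
  · rw [dif_pos hj]
    have hc : 0 ≤ π (σ j) - π (σ ⟨(j:ℕ)+1, hj⟩) := by
      have := hmono j ⟨(j:ℕ)+1, hj⟩ (by simp [Fin.le_def])
      linarith
    exact mul_le_mul_of_nonneg_right (hm.1 _) hc
  · rw [prefix_univ σ j hj, hm.2]

lemma phat_eq (hm : m ∈ Bdot p) (π : α → ℤ) (σ : Fin (Fintype.card α) ≃ α)
    (htight : ∀ j : Fin (Fintype.card α), ∀ h : (j:ℕ) + 1 < Fintype.card α,
      π (σ j) ≠ π (σ ⟨(j:ℕ)+1, h⟩) →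
      ∑ s ∈ (Finset.univ.filter (fun i => i ≤ j)).image σ, m s
        = p ((Finset.univ.filter (fun i => i ≤ j)).image σ)) :
    phat p π σ = ∑ s, π s * m s := by
  rw [inner_sum_eq π m σ]
  unfold phat
  apply Finset.sum_congr rfl
  intro j _
  by_cases hj : (j:ℕ) + 1 < Fintype.card α
  · by_cases hc : π (σ j) = π (σ ⟨(j:ℕ)+1, hj⟩)
    · rw [dif_pos hj, hc, sub_self, mul_zero, mul_zero]
    · rw [htight j hj hc]
  · rw [prefix_univ σ j hj, hm.2]

lemma telescope_ineq (a b : ℤ) : a * b ≤ b^2 + ⌊(a:ℚ)/2⌋ * ⌈(a:ℚ)/2⌉ := by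
  rcases Int.even_or_odd a with ⟨k, hk⟩ | ⟨k, hk⟩
  · subst hk
    have h1 : (((k+k : ℤ)):ℚ)/2 = ((k:ℤ):ℚ) := by push_cast; ring
    rw [h1, Int.floor_intCast, Int.ceil_intCast]
    nlinarith [sq_nonneg (b - k)]
  · subst hk
    have hf : ⌊((2*k+1:ℤ):ℚ)/2⌋ = k := by
      rw [Int.floor_eq_iff]; constructor <;> · push_cast; linarith
    have hc : ⌈((2*k+1:ℤ):ℚ)/2⌉ = k + 1 := by
      rw [Int.ceil_eq_iff]; constructor <;> · push_cast; linarith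
    rw [hf, hc]
    have hcons : 0 ≤ (b - k) * (b - k - 1) := by
      rcases le_or_gt b k with h | h
      · nlinarith [mul_nonneg (by linarith : (0:ℤ) ≤ k - b) (by linarith : (0:ℤ) ≤ k + 1 - b)]
      · apply mul_nonneg <;> omega
    nlinarith

lemma floor_ceil_odd (k : ℤ) : ⌊((2*k+1 : ℤ):ℚ)/2⌋ = k ∧ ⌈((2*k+1 : ℤ):ℚ)/2⌉ = k + 1 := by
  constructor
  · rw [Int.floor_eq_iff]; constructor <;> · push_cast; linarith
  · rw [Int.ceil_eq_iff]; constructor <;> · push_cast; linarith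

lemma telescope_eq (b a : ℤ) (h : a = 2*b+1 ∨ a = 2*b-1) :
    a * b - ⌊(a:ℚ)/2⌋ * ⌈(a:ℚ)/2⌉ = b^2 := by
  rcases h with h | h <;> subst h
  · obtain ⟨hf, hc⟩ := floor_ceil_odd b
    rw [hf, hc]; ring
  · have h2 : (2*b-1 : ℤ) = 2*(b-1)+1 := by ring
    obtain ⟨hf, hc⟩ := floor_ceil_odd (b-1)
    rw [← h2] at hf hc
    rw [hf, hc]; ring

/-- Weak duality. -/
lemma weak_duality (hm : m ∈ Bdot p) (π : α → ℤ) (σ : Fin (Fintype.card α) ≃ α)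
    (hmono : ∀ i j : Fin (Fintype.card α), i ≤ j → π (σ j) ≤ π (σ i)) :
    phat p π σ - ∑ s : α, ⌊(π s : ℚ) / 2⌋ * ⌈(π s : ℚ) / 2⌉ ≤ ∑ s : α, (m s)^2 := by
  have h1 := phat_le hm π σ hmono
  have h2 : ∑ s, π s * m s ≤ ∑ s : α, ((m s)^2 + ⌊(π s : ℚ) / 2⌋ * ⌈(π s : ℚ) / 2⌉) :=
    Finset.sum_le_sum fun s _ => telescope_ineq (π s) (m s)
  rw [Finset.sum_add_distrib] at h2
  linarith

end Helpers

/-- Min-max theorem for the integral square-sum over `Ḃ(p)`, together with the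
existence of an odd dual optimizer. -/
theorem stmt16 [Fintype α] [DecidableEq α] [Nonempty α]
    (p : Finset α → ℤ) (hp : Supermodular p) (h0 : p ∅ = 0)
    (hne : (Bdot p).Nonempty) :
    ∃ v : ℤ,
      IsLeast {w : ℤ | ∃ m ∈ Bdot p, w = ∑ s : α, (m s) ^ 2} v ∧
      IsGreatest {w : ℤ | ∃ (π : α → ℤ) (σ : Fin (Fintype.card α) ≃ α),
        (∀ i j : Fin (Fintype.card α), i ≤ j → π (σ j) ≤ π (σ i)) ∧
        w = phat p π σ - ∑ s : α, ⌊(π s : ℚ) / 2⌋ * ⌈(π s : ℚ) / 2⌉} v ∧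
      ∃ (π : α → ℤ) (σ : Fin (Fintype.card α) ≃ α),
        (∀ i j : Fin (Fintype.card α), i ≤ j → π (σ j) ≤ π (σ i)) ∧
        (∀ s : α, Odd (π s)) ∧
        v = phat p π σ - ∑ s : α, ⌊(π s : ℚ) / 2⌋ * ⌈(π s : ℚ) / 2⌉ := by
  classical
  obtain ⟨mw, hmw⟩ := hne
  obtain ⟨v, ⟨m₀, hm₀, hveq⟩, hmin⟩ := Int.exists_least_of_bdd
    (P := fun w => ∃ m ∈ Bdot p, w = ∑ s : α, (m s)^2)
    ⟨0, by rintro z ⟨m, hm, rfl⟩; positivity⟩ ⟨_, mw, hmw, rfl⟩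
  -- minimal tight sets
  choose Y hY1 hY2 hY3 using fun s => exists_min_tight hp hm₀ s
  -- optimality consequence
  have h4 : ∀ u t, t ∈ Y u → m₀ u - 1 ≤ m₀ t := by
    intro u t ht
    by_cases htu : t = u
    · subst htu; omega
    · have hmem := exchange_mem hm₀ htu (fun Z hZ hu => hY3 u Z hZ hu ht)
      set m' : α → ℤ := fun x => m₀ x + (if x = t then 1 else 0) - (if x = u then 1 else 0)
        with hm'
      have hv' : v ≤ ∑ s, (m' s)^2 := hmin _ ⟨m', hmem, rfl⟩
      have hsplit : ∑ s, (m' s)^2 = ∑ s, (m₀ s)^2 + ∑ s, ((m' s)^2 - (m₀ s)^2) := by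
        rw [← Finset.sum_add_distrib]
        apply Finset.sum_congr rfl
        intro s _; ring
      have hdiff : ∑ s, ((m' s)^2 - (m₀ s)^2) = (2*m₀ t + 1) + (-(2*m₀ u) + 1) := by
        rw [(Finset.sum_subset (Finset.subset_univ ({t, u} : Finset α)) ?_).symm]
        · rw [Finset.sum_pair htu]
          have ht' : m' t = m₀ t + 1 := by simp [hm', htu]
          have hu' : m' u = m₀ u - 1 := by simp [hm', Ne.symm htu]
          rw [ht', hu']; ring
        · intro x _ hx
          simp only [mem_insert, mem_singleton, not_or] at hx
          simp [hm', hx.1, hx.2]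
      rw [hsplit, hdiff, ← hveq] at hv'
      linarith
  -- the dual vector
  set π : α → ℤ := fun s => if (∃ u, m₀ s + 1 ≤ m₀ u ∧ s ∈ Y u) then 2*m₀ s + 1
    else 2*m₀ s - 1 with hπ
  have hπcases : ∀ s, π s = 2*m₀ s + 1 ∨ π s = 2*m₀ s - 1 := by
    intro s
    by_cases h : (∃ u, m₀ s + 1 ≤ m₀ u ∧ s ∈ Y u)
    · left; show (if _ then _ else _) = _; rw [if_pos h]
    · right; show (if _ then _ else _) = _; rw [if_neg h]
  have hπodd : ∀ s, Odd (π s) := by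
    intro s
    rcases hπcases s with h | h
    · exact ⟨m₀ s, by omega⟩
    · exact ⟨m₀ s - 1, by omega⟩
  -- sorting permutation
  set e : Fin (Fintype.card α) ≃ α := (Fintype.equivFin α).symm with he
  set τ := Tuple.sort (fun i => -π (e i)) with hτ
  set σ : Fin (Fintype.card α) ≃ α := τ.trans e with hσ
  have hmono : ∀ i j : Fin (Fintype.card α), i ≤ j → π (σ j) ≤ π (σ i) := by
    intro i j hij
    have h := Tuple.monotone_sort (fun i => -π (e i)) hij
    simp only [Function.comp_apply] at h
    have : σ i = e (τ i) := rfl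
    have h2 : σ j = e (τ j) := rfl
    rw [this, h2]
    linarith
  -- tightness of the level sets of π
  have htightA : ∀ θ : ℤ, Tight p m₀ (univ.filter (fun s => 2*θ+1 ≤ π s)) := by
    intro θ
    have hset : univ.filter (fun s => 2*θ+1 ≤ π s)
        = (univ.filter (fun u => θ+1 ≤ m₀ u)).biUnion Y := by
      ext x
      simp only [mem_filter, mem_biUnion, mem_univ, true_and]
      constructor
      · intro hx
        rcases hπcases x with h | h
        · by_cases hx1 : θ+1 ≤ m₀ x
          · exact ⟨x, hx1, hY2 x⟩
          · have hmx : m₀ x = θ := by omega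
            have hcond : ∃ u, m₀ x + 1 ≤ m₀ u ∧ x ∈ Y u := by
              by_contra hc
              rw [hπ] at h
              simp only [hc, if_false] at h
              omega
            obtain ⟨u, hu1, hu2⟩ := hcond
            exact ⟨u, by omega, hu2⟩
        · exact ⟨x, by omega, hY2 x⟩
      · rintro ⟨u, hu, hxu⟩
        have hge := h4 u x hxu
        by_cases hx1 : θ+1 ≤ m₀ x
        · rcases hπcases x with h | h <;> omega
        · have hmx : m₀ x = θ := by omega
          have hcond : ∃ u', m₀ x + 1 ≤ m₀ u' ∧ x ∈ Y u' := ⟨u, by omega, hxu⟩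
          rw [hπ]
          simp only [hcond, if_true]
          omega
    rw [hset]
    exact tight_biUnion hp hm₀ h0 Y _ (fun u _ => hY1 u)
  -- prefix sets are tight at strict drops
  have hpref : ∀ j : Fin (Fintype.card α), ∀ h : (j:ℕ)+1 < Fintype.card α,
      π (σ j) ≠ π (σ ⟨(j:ℕ)+1, h⟩) →
      ∑ s ∈ (Finset.univ.filter (fun i => i ≤ j)).image σ, m₀ s
        = p ((Finset.univ.filter (fun i => i ≤ j)).image σ) := by
    intro j hj hne'
    have hlt : π (σ ⟨(j:ℕ)+1, hj⟩) < π (σ j) :=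
      lt_of_le_of_ne (hmono j ⟨(j:ℕ)+1, hj⟩ (by simp [Fin.le_def])) (Ne.symm hne')
    have hIj : (Finset.univ.filter (fun i => i ≤ j)).image σ
        = univ.filter (fun x => π (σ j) ≤ π x) := by
      ext x
      simp only [mem_image, mem_filter, mem_univ, true_and]
      constructor
      · rintro ⟨i, hi, rfl⟩
        exact hmono i j hi
      · intro hx
        refine ⟨σ.symm x, ?_, σ.apply_symm_apply x⟩
        by_contra hgt
        push_neg at hgt
        have hle : (⟨(j:ℕ)+1, hj⟩ : Fin (Fintype.card α)) ≤ σ.symm x := by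
          rw [Fin.le_def]
          rw [Fin.lt_def] at hgt
          simp only [Fin.val_mk]
          omega
        have h2 := hmono _ _ hle
        rw [σ.apply_symm_apply] at h2
        linarith
    obtain ⟨θ, hθ⟩ : ∃ θ : ℤ, π (σ j) = 2*θ+1 := by
      rcases hπcases (σ j) with h | h
      · exact ⟨m₀ (σ j), h⟩
      · exact ⟨m₀ (σ j) - 1, by omega⟩
    have := htightA θ
    unfold Tight at this
    rw [hIj]
    have hfeq : univ.filter (fun x => π (σ j) ≤ π x)
        = univ.filter (fun s => 2*θ+1 ≤ π s) := by
      apply Finset.filter_congr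
      intro x _
      rw [hθ]
    rw [hfeq]
    exact this
  -- strong duality value
  have hkey : phat p π σ = ∑ s, π s * m₀ s := phat_eq hm₀ π σ hpref
  have hfinal : ∑ s, π s * m₀ s - ∑ s : α, ⌊(π s : ℚ) / 2⌋ * ⌈(π s : ℚ) / 2⌉
      = ∑ s : α, (m₀ s)^2 := by
    rw [← Finset.sum_sub_distrib]
    apply Finset.sum_congr rfl
    intro s _
    exact telescope_eq (m₀ s) (π s) (hπcases s)
  have hvdual : v = phat p π σ - ∑ s : α, ⌊(π s : ℚ) / 2⌋ * ⌈(π s : ℚ) / 2⌉ := by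
    rw [hkey]
    omega
  refine ⟨v, ⟨⟨m₀, hm₀, hveq⟩, fun w hw => hmin w hw⟩, ⟨⟨π, σ, hmono, hvdual⟩, ?_⟩,
    π, σ, hmono, hπodd, hvdual⟩
  rintro w ⟨π', σ', hmono', rfl⟩
  have := weak_duality hm₀ π' σ' hmono'
  omega
end

section
/- Let S be a nonempty finite set, p a set-function assigning an integer to every subset of S, and b a set-function assigning a nonnegative integer to every subset of S. Suppose integers μ < μ′ and subsets X, X′ ⊆ S satisfy: (i) p(X) − μ·b(X) ≥ p(Y) − μ·b(Y) for every Y ⊆ S (X maximizes p − μ·b); (ii) b(X) > 0 and μ′ = ⌈p(X)/b(X)⌉; (iii) p(X′) − μ′·b(X′) > 0. Then b(X′) < b(X). -/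
/-- Key lemma for the Newton–Dinkelbach algorithm maximizing `⌈p(X)/b(X)⌉`:
if `X` maximizes `p − μ·b`, `b(X) > 0`, `μ′ = ⌈p(X)/b(X)⌉ > μ`, and
`p(X′) − μ′·b(X′) > 0`, then `b(X′) < b(X)`. -/
theorem stmt17 {α : Type*} [Fintype α] [Nonempty α]
    (p b : Finset α → ℤ) (hb : ∀ Y : Finset α, 0 ≤ b Y)
    (μ μ' : ℤ) (hμ : μ < μ')
    (X X' : Finset α)
    (hmax : ∀ Y : Finset α, p Y - μ * b Y ≤ p X - μ * b X)
    (hbX : 0 < b X)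
    (hμ' : μ' = ⌈(p X : ℚ) / (b X : ℚ)⌉)
    (hX' : 0 < p X' - μ' * b X') :
    b X' < b X := by
  have hpX : p X ≤ μ' * b X := by
    have h1 : (p X : ℚ) / (b X : ℚ) ≤ (μ' : ℚ) := by
      rw [hμ']; exact Int.le_ceil _
    have hbQ : (0 : ℚ) < (b X : ℚ) := by exact_mod_cast hbX
    have := (div_le_iff₀ hbQ).mp h1
    exact_mod_cast this
  have key : (μ' - μ) * b X' < (μ' - μ) * b X := by
    calc (μ' - μ) * b X' < p X' - μ * b X' := by linarith
      _ ≤ p X - μ * b X := hmax X'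
      _ ≤ (μ' - μ) * b X := by linarith
  exact lt_of_mul_lt_mul_left key (by linarith)
end
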